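/- arXiv:0803.0055 — 3 statements merged into one kernel-verified Lean document; each statement's English description precedes it below -/
import Mathlib

section
/- The global rule F : C → C of any sand automaton is uniformly continuous with respect to the distance d. -/
open Filter

/-- The set `Z̃ = ℤ ∪ {−∞, +∞}` of extended integers. -/
abbrev Ztilde := WithBot (WithTop ℤ)

/-- Embedding of `ℤ` into `Z̃`. -/
def Ztilde.ofInt (z : ℤ) : Ztilde := ((z : WithTop ℤ) : WithBot (WithTop ℤ))

/-- The underlying integer of a finite extended integer (0 on `±∞`). -/
def Ztilde.toInt (n : Ztilde) : ℤ := WithTop.untopD 0 (WithBot.unbotD 0 n)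

/-- The sand-automata configuration space `C = Z̃^(ℤ^d)`. -/
abbrev Conf (d : ℕ) := (Fin d → ℤ) → Ztilde

/-- `ζ : C → {0,1}^(ℤ^(d+1))`, `ζ(x)_(i,k) = 1` iff `x_i ≥ k`. -/
noncomputable def zeta {d : ℕ} (x : Conf d) : (Fin d → ℤ) × ℤ → Bool :=
  fun j => decide (Ztilde.ofInt j.2 ≤ x j.1)

/-- The subshift `S_K`: configurations with no `0` below a `1` in a column. -/
def SK (d : ℕ) : Set ((Fin d → ℤ) × ℤ → Bool) :=
  {y | ∀ (i : Fin d → ℤ) (k : ℤ), y (i, k + 1) = true → y (i, k) = true}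

/-- The sup-norm `|j|_∞` of an index in `ℤ^(d+1) = ℤ^d × ℤ`. -/
def idxNorm {d : ℕ} (j : (Fin d → ℤ) × ℤ) : ℕ :=
  max (Finset.univ.sup fun t => (j.1 t).natAbs) j.2.natAbs

open scoped Classical in
/-- The distance `d(x,y) = 2^(−min{|j|_∞ : ζ(x)_j ≠ ζ(y)_j})`, `0` if `x = y`. -/
noncomputable def saDist {d : ℕ} (x y : Conf d) : ℝ :=
  if x = y then 0
  else (2 : ℝ) ^ (-((sInf {n : ℕ | ∃ j, idxNorm j = n ∧ zeta x j ≠ zeta y j} : ℕ) : ℤ))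

/-- The measuring device `β_r^m`. -/
noncomputable def beta (r : ℕ) (m : ℤ) (n : Ztilde) : Ztilde :=
  if Ztilde.ofInt (m + r) < n then ⊤
  else if n < Ztilde.ofInt (m - r) then ⊥
  else Ztilde.ofInt (n.toInt - m)

/-- The neighborhood `[−r,r]^d \ {0}` of a sand automaton of radius `r`. -/
def Nbhd (d r : ℕ) := {k : Fin d → ℤ // (∀ t, (k t).natAbs ≤ r) ∧ k ≠ 0}

/-- The range `R_r^i(x)` of center `i` and radius `r`. -/
noncomputable def saRange {d : ℕ} (r : ℕ) (x : Conf d) (i : Fin d → ℤ) : Nbhd d r → Ztilde :=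
  fun k => beta r (x i).toInt (x (i + k.1))

/-- A sand automaton of dimension `d`: a radius `r` and a local rule `f`
taking values in `{−r,…,r}`. -/
structure SandAutomaton (d : ℕ) where
  r : ℕ
  f : (Nbhd d r → Ztilde) → ℤ
  f_mem : ∀ R, (f R).natAbs ≤ r

/-- The global rule `F : C → C` of a sand automaton. -/
noncomputable def SandAutomaton.global {d : ℕ} (S : SandAutomaton d) (x : Conf d) : Conf d :=
  fun i => if x i = ⊤ ∨ x i = ⊥ then x i
    else Ztilde.ofInt ((x i).toInt + S.f (saRange S.r x i))

/-- The shift map `σ^k`. -/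
def shift {d : ℕ} (k : Fin d → ℤ) (x : Conf d) : Conf d := fun i => x (i + k)

/-- The raising map `ρ`. -/
def raise {d : ℕ} (x : Conf d) : Conf d :=
  fun i => if x i = ⊤ ∨ x i = ⊥ then x i else Ztilde.ofInt ((x i).toInt + 1)

/-- A map `F : C → C` is infinity-preserving. -/
def InfinityPreserving {d : ℕ} (F : Conf d → Conf d) : Prop :=
  ∀ (x : Conf d) (i : Fin d → ℤ),
    (F x i = ⊤ ↔ x i = ⊤) ∧ (F x i = ⊥ ↔ x i = ⊥)

namespace SAProof

lemma ofInt_le_ofInt {a b : ℤ} : Ztilde.ofInt a ≤ Ztilde.ofInt b ↔ a ≤ b := by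
  simp [Ztilde.ofInt]

lemma toInt_ofInt (v : ℤ) : (Ztilde.ofInt v).toInt = v := rfl

lemma ofInt_ne_top (v : ℤ) : Ztilde.ofInt v ≠ ⊤ := by simp [Ztilde.ofInt]
lemma ofInt_ne_bot (v : ℤ) : Ztilde.ofInt v ≠ ⊥ := by simp [Ztilde.ofInt]

lemma trich (a : Ztilde) : a = ⊥ ∨ a = ⊤ ∨ ∃ v, a = Ztilde.ofInt v := by
  induction a using WithBot.recBotCoe with
  | bot => left; rfl
  | coe a => induction a using WithTop.recTopCoe with
    | top => right; left; rfl
    | coe v => right; right; exact ⟨v, rfl⟩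

lemma not_top_le (v : ℤ) : ¬ (⊤ : Ztilde) ≤ Ztilde.ofInt v := by simp [Ztilde.ofInt]
lemma not_le_bot (v : ℤ) : ¬ Ztilde.ofInt v ≤ ⊥ := by simp [Ztilde.ofInt]
lemma bot_lt_ofInt (v : ℤ) : (⊥ : Ztilde) < Ztilde.ofInt v :=
  lt_of_le_of_ne bot_le (fun h => ofInt_ne_bot v h.symm)

lemma ofInt_lt_iff {c : ℤ} {a : Ztilde} :
    Ztilde.ofInt c < a ↔ Ztilde.ofInt (c+1) ≤ a := by
  rcases trich a with h | h | ⟨v, h⟩ <;> subst h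
  · simp [Ztilde.ofInt]
  · simp [Ztilde.ofInt, lt_top_iff_ne_top]
  · rw [ofInt_le_ofInt]; constructor
    · intro h; have := (by simpa [Ztilde.ofInt] using h : c < v); omega
    · intro h; simp [Ztilde.ofInt]; omega

lemma eq_ofInt_of {v : ℤ} {b : Ztilde} (h1 : Ztilde.ofInt v ≤ b)
    (h2 : ¬ Ztilde.ofInt (v+1) ≤ b) : b = Ztilde.ofInt v := by
  rcases trich b with h | h | ⟨w, h⟩ <;> subst h
  · exact absurd h1 (not_le_bot v)
  · exact absurd le_top h2
  · rw [ofInt_le_ofInt] at h1 h2; congr 1; omega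

lemma f_bounds {d : ℕ} (S : SandAutomaton d) (R : Nbhd d S.r → Ztilde) :
    -(S.r : ℤ) ≤ S.f R ∧ S.f R ≤ S.r := by
  have := S.f_mem R; omega

lemma global_ofInt {d : ℕ} (S : SandAutomaton d) {x : Conf d} {i : Fin d → ℤ} {v : ℤ}
    (hv : x i = Ztilde.ofInt v) :
    S.global x i = Ztilde.ofInt (v + S.f (saRange S.r x i)) := by
  simp [SandAutomaton.global, hv, ofInt_ne_top, ofInt_ne_bot, toInt_ofInt]

lemma F_ge {d : ℕ} (S : SandAutomaton d) {x : Conf d} {i : Fin d → ℤ} {c : ℤ}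
    (h : Ztilde.ofInt c ≤ x i) : Ztilde.ofInt (c - S.r) ≤ S.global x i := by
  rcases trich (x i) with hx | hx | ⟨v, hx⟩
  · exact absurd (hx ▸ h) (not_le_bot c)
  · simp [SandAutomaton.global, hx]
  · rw [global_ofInt S hx, ofInt_le_ofInt]
    have h1 := (f_bounds S (saRange S.r x i)).1
    have h2 : c ≤ v := ofInt_le_ofInt.mp (hx ▸ h)
    omega

lemma F_lt {d : ℕ} (S : SandAutomaton d) {x : Conf d} {i : Fin d → ℤ} {c : ℤ}
    (h : x i < Ztilde.ofInt c) : S.global x i < Ztilde.ofInt (c + S.r) := by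
  rcases trich (x i) with hx | hx | ⟨v, hx⟩
  · simp only [SandAutomaton.global, hx]; simp only [or_true, if_pos]
    exact bot_lt_ofInt _
  · exact absurd (hx ▸ h) (by simp)
  · rw [global_ofInt S hx]
    have h1 := (f_bounds S (saRange S.r x i)).2
    have h2 : v < c := by
      have := hx ▸ h
      by_contra hc
      exact absurd this (not_lt.mpr (ofInt_le_ofInt.mpr (not_lt.mp hc)))
    refine lt_of_le_of_ne (ofInt_le_ofInt.mpr (by omega)) ?_
    intro hcontra
    have e1 := ofInt_le_ofInt.mp hcontra.le
    have e2 := ofInt_le_ofInt.mp hcontra.ge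
    omega

/-- agreement of zeta up to norm m, stated levelwise -/
def Agr {d : ℕ} (m : ℕ) (x y : Conf d) : Prop :=
  ∀ (i : Fin d → ℤ) (κ : ℤ), (∀ t, (i t).natAbs ≤ m) → κ.natAbs ≤ m →
    (Ztilde.ofInt κ ≤ x i ↔ Ztilde.ofInt κ ≤ y i)

lemma key {d : ℕ} (S : SandAutomaton d) (k : ℕ) {x y : Conf d}
    (h : Agr (k + 2 * S.r + 1) x y) (i : Fin d → ℤ) (κ : ℤ)
    (hi : ∀ t, (i t).natAbs ≤ k) (hκ : κ.natAbs ≤ k) :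
    (Ztilde.ofInt κ ≤ S.global x i ↔ Ztilde.ofInt κ ≤ S.global y i) := by
  set r := S.r with hr
  set m := k + 2 * r + 1 with hm
  have him : ∀ t, (i t).natAbs ≤ m := fun t => le_trans (hi t) (by omega)
  by_cases hA : Ztilde.ofInt ((k : ℤ) + r + 1) ≤ x i
  · have hAy : Ztilde.ofInt ((k : ℤ) + r + 1) ≤ y i :=
      (h i _ him (by omega)).mp hA
    have b1 : Ztilde.ofInt κ ≤ S.global x i :=
      le_trans (ofInt_le_ofInt.mpr (by omega)) (F_ge S hA)
    have b2 : Ztilde.ofInt κ ≤ S.global y i :=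
      le_trans (ofInt_le_ofInt.mpr (by omega)) (F_ge S hAy)
    exact iff_of_true b1 b2
  · by_cases hB : Ztilde.ofInt (-(k : ℤ) - r) ≤ x i
    · -- middle case: x i = y i = ofInt v with |v| ≤ k + r
      rcases trich (x i) with hx | hx | ⟨v, hx⟩
      · exact absurd (hx ▸ hB) (not_le_bot _)
      · exact absurd (hx ▸ le_top) hA
      have hv1 : -(k : ℤ) - r ≤ v := ofInt_le_ofInt.mp (hx ▸ hB)
      have hv2 : v ≤ (k : ℤ) + r := by
        by_contra hc
        exact hA (hx ▸ ofInt_le_ofInt.mpr (by omega))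
      have hy : y i = Ztilde.ofInt v := by
        refine eq_ofInt_of ?_ ?_
        · exact (h i v him (by omega)).mp (hx ▸ le_refl _)
        · intro hc
          exact absurd ((h i (v+1) him (by omega)).mpr hc)
            (by rw [hx, ofInt_le_ofInt]; omega)
      have hrange : saRange S.r x i = saRange S.r y i := by
        funext nb
        have hj : ∀ t, ((i + nb.1) t).natAbs ≤ m := by
          intro t
          have h1 := hi t; have h2 := nb.2.1 t
          simp only [Pi.add_apply]
          omega
        show beta S.r (x i).toInt (x (i + nb.1)) = beta S.r (y i).toInt (y (i + nb.1))
        rw [hx, hy, toInt_ofInt]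
        set j := i + nb.1
        by_cases c1 : Ztilde.ofInt (v + r) < x j
        · have c1' : Ztilde.ofInt (v + r) < y j := by
            rw [ofInt_lt_iff] at c1 ⊢
            exact (h j (v + r + 1) hj (by omega)).mp c1
          simp [beta, ← hr, c1, c1']
        · have c1' : ¬ Ztilde.ofInt (v + r) < y j := by
            rw [ofInt_lt_iff] at c1 ⊢
            exact fun hc => c1 ((h j (v + r + 1) hj (by omega)).mpr hc)
          by_cases c2 : x j < Ztilde.ofInt (v - r)
          · have c2' : y j < Ztilde.ofInt (v - r) := by
              have hc2 : ¬ Ztilde.ofInt (v - r) ≤ x j := not_le.mpr c2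
              exact not_le.mp (fun hc => hc2 ((h j (v - r) hj (by omega)).mpr hc))
            simp [beta, ← hr, c1, c1', c2, c2']
          · -- x j = y j
            have hge : Ztilde.ofInt (v - r) ≤ x j := not_lt.mp c2
            have hle : ¬ Ztilde.ofInt (v + r) < x j := c1
            rcases trich (x j) with hxj | hxj | ⟨w, hxj⟩
            · exact absurd (hxj ▸ hge) (not_le_bot _)
            · rw [hxj] at c1
              exact absurd (lt_top_iff_ne_top.mpr (ofInt_ne_top _)) c1
            have hw1 : v - r ≤ w := ofInt_le_ofInt.mp (hxj ▸ hge)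
            have hw2 : w ≤ v + r := by
              by_contra hc
              exact c1 (hxj ▸ (ofInt_lt_iff.mpr (ofInt_le_ofInt.mpr (by omega))))
            have hyj : y j = Ztilde.ofInt w := by
              refine eq_ofInt_of ?_ ?_
              · exact (h j w hj (by omega)).mp (hxj ▸ le_refl _)
              · intro hc
                exact absurd ((h j (w+1) hj (by omega)).mpr hc)
                  (by rw [hxj, ofInt_le_ofInt]; omega)
            rw [hxj, hyj]
      rw [show S.global x i = S.global y i by
        rw [global_ofInt S hx, global_ofInt S hy, hrange]]
    · -- low case
      have hBy : ¬ Ztilde.ofInt (-(k : ℤ) - r) ≤ y i := by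
        intro hc
        exact hB ((h i _ him (by omega)).mpr hc)
      have b1 : S.global x i < Ztilde.ofInt (-(k : ℤ) - r + r) := F_lt S (not_le.mp hB)
      have b2 : S.global y i < Ztilde.ofInt (-(k : ℤ) - r + r) := F_lt S (not_le.mp hBy)
      refine iff_of_false ?_ ?_
      · exact fun hc => absurd (lt_of_le_of_lt hc b1) (not_lt.mpr (ofInt_le_ofInt.mpr (by omega)))
      · exact fun hc => absurd (lt_of_le_of_lt hc b2) (not_lt.mpr (ofInt_le_ofInt.mpr (by omega)))

lemma sep {a b : Ztilde} (hab : a < b) :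
    ∃ κ : ℤ, ¬ Ztilde.ofInt κ ≤ a ∧ Ztilde.ofInt κ ≤ b := by
  rcases trich a with ha | ha | ⟨v, ha⟩ <;> subst ha
  · rcases trich b with hb | hb | ⟨w, hb⟩ <;> subst hb
    · exact absurd hab (lt_irrefl _)
    · exact ⟨0, by simp [Ztilde.ofInt], le_top⟩
    · exact ⟨w, by simp [Ztilde.ofInt], le_refl _⟩
  · exact absurd hab not_top_lt
  · exact ⟨v + 1, fun hc => by rw [ofInt_le_ofInt] at hc; omega, ofInt_lt_iff.mp hab⟩

lemma sep' {a b : Ztilde} (hab : a ≠ b) :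
    ∃ κ : ℤ, ¬ ((Ztilde.ofInt κ ≤ a) ↔ (Ztilde.ofInt κ ≤ b)) := by
  rcases lt_or_gt_of_ne hab with h | h
  · obtain ⟨κ, h1, h2⟩ := sep h
    exact ⟨κ, fun hiff => h1 (hiff.mpr h2)⟩
  · obtain ⟨κ, h1, h2⟩ := sep h
    exact ⟨κ, fun hiff => h1 (hiff.mp h2)⟩

lemma idxNorm_le {d : ℕ} {j : (Fin d → ℤ) × ℤ} {m : ℕ} :
    idxNorm j ≤ m ↔ (∀ t, (j.1 t).natAbs ≤ m) ∧ j.2.natAbs ≤ m := by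
  simp [idxNorm, Finset.sup_le_iff]

end SAProof

open SAProof in
/-- The global rule of any sand automaton is uniformly
continuous with respect to the distance `d`. -/

theorem sa_global_uniformly_continuous (d : ℕ) (hd : 1 ≤ d) (S : SandAutomaton d) :
    ∀ ε : ℝ, 0 < ε → ∃ δ : ℝ, 0 < δ ∧
      ∀ x y : Conf d, saDist x y < δ → saDist (S.global x) (S.global y) < ε := by
  classical
  intro ε hε
  obtain ⟨k, hk⟩ := exists_pow_lt_of_lt_one hε (by norm_num : (1:ℝ)/2 < 1)
  set m : ℕ := k + 2 * S.r + 1 with hm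
  refine ⟨(2:ℝ) ^ (-(m:ℤ)), by positivity, ?_⟩
  intro x y hxy
  by_cases hxyeq : x = y
  · subst hxyeq
    simpa [saDist] using hε
  -- agreement up to m
  have hxy' : (2:ℝ) ^ (-((sInf {n : ℕ | ∃ j, idxNorm j = n ∧ zeta x j ≠ zeta y j} : ℕ) : ℤ))
      < (2:ℝ) ^ (-(m:ℤ)) := by
    rw [saDist, if_neg hxyeq] at hxy
    convert hxy using 2
  have hsinf : (m : ℤ) < ((sInf {n : ℕ | ∃ j, idxNorm j = n ∧ zeta x j ≠ zeta y j} : ℕ) : ℤ) := by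
    have := (zpow_lt_zpow_iff_right₀ (by norm_num : (1:ℝ) < 2)).mp hxy'
    omega
  have hagr : SAProof.Agr m x y := by
    intro i κ hi hκ
    by_contra hne
    have hmem : idxNorm (i, κ) ∈ {n : ℕ | ∃ j, idxNorm j = n ∧ zeta x j ≠ zeta y j} := by
      refine ⟨(i, κ), rfl, ?_⟩
      simp only [zeta, ne_eq, decide_eq_decide]
      exact hne
    have h1 := Nat.sInf_le hmem
    have h2 : idxNorm (i, κ) ≤ m := SAProof.idxNorm_le.mpr ⟨hi, hκ⟩
    omega
  -- agreement of images up to k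
  have hkey : ∀ j : (Fin d → ℤ) × ℤ, idxNorm j ≤ k →
      zeta (S.global x) j = zeta (S.global y) j := by
    intro j hj
    obtain ⟨hj1, hj2⟩ := SAProof.idxNorm_le.mp hj
    simp only [zeta, decide_eq_decide]
    exact SAProof.key S k hagr j.1 j.2 hj1 hj2
  by_cases hFeq : S.global x = S.global y
  · simpa [saDist, hFeq] using hε
  · rw [saDist, if_neg hFeq]
    set T := {n : ℕ | ∃ j, idxNorm j = n ∧ zeta (S.global x) j ≠ zeta (S.global y) j} with hT
    have hTne : T.Nonempty := by
      obtain ⟨i, hi⟩ := Function.ne_iff.mp hFeq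
      obtain ⟨κ, hκ⟩ := SAProof.sep' hi
      exact ⟨idxNorm (i, κ), (i, κ), rfl, by simpa [zeta, decide_eq_decide] using hκ⟩
    obtain ⟨j, hjnorm, hjne⟩ := Nat.sInf_mem hTne
    have hklt : k < sInf T := by
      by_contra hc
      exact hjne (hkey j (by omega))
    calc (2:ℝ) ^ (-((sInf T : ℕ) : ℤ)) ≤ (2:ℝ) ^ (-((k:ℤ)+1)) := by
            apply zpow_le_zpow_right₀ (by norm_num : (1:ℝ) ≤ 2)
            omega
      _ < (2:ℝ) ^ (-(k:ℤ)) := by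
            apply zpow_lt_zpow_iff_right₀ (by norm_num : (1:ℝ) < 2) |>.mpr
            omega
      _ = ((1:ℝ)/2) ^ k := by
            rw [one_div, inv_pow, ← zpow_natCast, ← zpow_neg]
      _ < ε := hk
end

section
/- Let F : C → C be a map that is continuous with respect to the distance d and infinity-preserving. Then there exists an integer l ∈ ℕ such that for every configuration x ∈ C with x_0 = 0, the value F(x)_0 is finite and |F(x)_0| ≤ l. -/
open Filter

section Aux

lemma ofInt_le_ofInt {a b : ℤ} : Ztilde.ofInt a ≤ Ztilde.ofInt b ↔ a ≤ b := by
  simp [Ztilde.ofInt]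

lemma ofInt_ne_bot (a : ℤ) : Ztilde.ofInt a ≠ ⊥ := by simp [Ztilde.ofInt]

lemma ofInt_ne_top (a : ℤ) : Ztilde.ofInt a ≠ ⊤ := by simp [Ztilde.ofInt]

lemma not_ofInt_le_bot (k : ℤ) : ¬ Ztilde.ofInt k ≤ ⊥ := by
  simp [Ztilde.ofInt]

lemma ztilde_cases (a : Ztilde) : a = ⊥ ∨ a = ⊤ ∨ ∃ n, a = Ztilde.ofInt n := by
  induction a using WithBot.recBotCoe with
  | bot => left; rfl
  | coe b =>
    induction b using WithTop.recTopCoe with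
    | top => right; left; rfl
    | coe n => right; right; exact ⟨n, rfl⟩

lemma ext_of_forall_le {a b : Ztilde}
    (h : ∀ k : ℤ, Ztilde.ofInt k ≤ a ↔ Ztilde.ofInt k ≤ b) : a = b := by
  rcases ztilde_cases a with ha | ha | ⟨m, ha⟩ <;>
    rcases ztilde_cases b with hb | hb | ⟨n, hb⟩ <;> subst ha <;> subst hb
  · rfl
  · exact absurd ((h 0).mpr le_top) (not_ofInt_le_bot 0)
  · exact absurd ((h n).mpr (ofInt_le_ofInt.mpr le_rfl)) (not_ofInt_le_bot n)
  · exact absurd ((h 0).mp le_top) (not_ofInt_le_bot 0)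
  · rfl
  · have := ofInt_le_ofInt.mp ((h (n+1)).mp le_top); omega
  · exact absurd ((h m).mp (ofInt_le_ofInt.mpr le_rfl)) (not_ofInt_le_bot m)
  · have := ofInt_le_ofInt.mp ((h (m+1)).mpr le_top); omega
  · have h1 := ofInt_le_ofInt.mp ((h m).mp (ofInt_le_ofInt.mpr le_rfl))
    have h2 := ofInt_le_ofInt.mp ((h n).mpr (ofInt_le_ofInt.mpr le_rfl))
    have : m = n := le_antisymm h1 h2
    rw [this]

lemma zeta_injective {d : ℕ} : Function.Injective (zeta (d := d)) := by
  intro x y h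
  funext i
  apply ext_of_forall_le
  intro k
  have := congrFun h (i, k)
  simpa [zeta, decide_eq_decide] using this

lemma saDist_le {d : ℕ} {x y : Conf d} {m : ℕ}
    (h : ∀ j, idxNorm j ≤ m → zeta x j = zeta y j) :
    saDist x y ≤ (2:ℝ) ^ (-(m:ℤ) - 1) := by
  unfold saDist
  split_ifs with hxy
  · positivity
  · have hzne : zeta x ≠ zeta y := fun hc => hxy (zeta_injective hc)
    obtain ⟨j, hj⟩ := Function.ne_iff.mp hzne
    set S : Set ℕ := {n : ℕ | ∃ j, idxNorm j = n ∧ zeta x j ≠ zeta y j} with hS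
    have hSne : S.Nonempty := ⟨idxNorm j, j, rfl, hj⟩
    have hlb : m + 1 ≤ sInf S := by
      apply le_csInf hSne
      rintro n ⟨j', hj1, hj2⟩
      by_contra hlt
      push_neg at hlt
      exact hj2 (h j' (by omega))
    have hexp : -((sInf S : ℕ) : ℤ) ≤ -(m:ℤ) - 1 := by
      have := hlb; omega
    exact zpow_le_zpow_right₀ one_le_two hexp

lemma agree_of_saDist_lt {d : ℕ} {x y : Conf d} {m : ℕ}
    (h : saDist x y < (2:ℝ) ^ (-(m:ℤ) - 1)) :
    ∀ j, idxNorm j ≤ m → zeta x j = zeta y j := by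
  intro j hj
  by_contra hne
  have hxy : x ≠ y := fun e => hne (by rw [e])
  rw [saDist, if_neg hxy] at h
  set S : Set ℕ := {n : ℕ | ∃ j, idxNorm j = n ∧ zeta x j ≠ zeta y j} with hS
  have h1 : sInf S ≤ idxNorm j := Nat.sInf_le ⟨j, rfl, hne⟩
  have hexp : -(m:ℤ) - 1 < -((sInf S : ℕ) : ℤ) := by
    have : sInf S ≤ m := le_trans h1 hj
    omega
  have := zpow_lt_zpow_right₀ (by norm_num : (1:ℝ) < 2) hexp
  linarith

lemma finite_idx {d m : ℕ} : {j : (Fin d → ℤ) × ℤ | idxNorm j ≤ m}.Finite := by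
  have hsub : {j : (Fin d → ℤ) × ℤ | idxNorm j ≤ m} ⊆
      (Set.pi Set.univ fun _ : Fin d => Set.Icc (-(m:ℤ)) m) ×ˢ Set.Icc (-(m:ℤ)) m := by
    rintro ⟨f, k⟩ hj
    simp only [idxNorm, max_le_iff, Finset.sup_le_iff, Finset.mem_univ, forall_true_left,
      Set.mem_setOf_eq] at hj
    obtain ⟨h1, h2⟩ := hj
    constructor
    · intro t _
      have := h1 t
      simp only [Set.mem_Icc]
      omega
    · simp only [Set.mem_Icc]
      omega
  exact ((Set.Finite.pi fun _ => Set.finite_Icc _ _).prod (Set.finite_Icc _ _)).subset hsub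

end Aux


/-- If `F : C → C` is continuous w.r.t. `d` and
infinity-preserving, then there is `l ∈ ℕ` such that for every configuration
`x` with `x_0 = 0`, the value `F(x)_0` is finite and `|F(x)_0| ≤ l`. -/
theorem bounded_image_at_origin (d : ℕ) (hd : 1 ≤ d) (F : Conf d → Conf d)
    (hcont : ∀ x : Conf d, ∀ ε : ℝ, 0 < ε → ∃ δ : ℝ, 0 < δ ∧
      ∀ y : Conf d, saDist x y < δ → saDist (F x) (F y) < ε)
    (hinf : InfinityPreserving F) :
    ∃ l : ℕ, ∀ x : Conf d, x 0 = Ztilde.ofInt 0 →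
      ∃ z : ℤ, F x 0 = Ztilde.ofInt z ∧ z.natAbs ≤ l := by
  classical
  by_contra hcon
  push_neg at hcon
  choose xs hx0 hbig using hcon
  set U : Ultrafilter ℕ := Filter.hyperfilter ℕ with hU
  set P : (Fin d → ℤ) × ℤ → Prop := fun j => {l | zeta (xs l) j = true} ∈ U with hP
  have Pmono : ∀ (i : Fin d → ℤ) (k k' : ℤ), k ≤ k' → P (i, k') → P (i, k) := by
    intro i k k' hkk h
    refine Filter.mem_of_superset h ?_
    intro l hl
    simp only [Set.mem_setOf_eq, zeta, decide_eq_true_eq] at *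
    exact le_trans (ofInt_le_ofInt.mpr hkk) hl
  set xlim : Conf d := fun i =>
    if ∀ k : ℤ, P (i, k) then ⊤
    else if ∀ k : ℤ, ¬ P (i, k) then ⊥
    else Ztilde.ofInt (sSup {k | P (i, k)}) with hxlim
  have key : ∀ (i : Fin d → ℤ) (k : ℤ), (Ztilde.ofInt k ≤ xlim i) ↔ P (i, k) := by
    intro i k
    rw [hxlim]
    simp only
    split_ifs with h1 h2
    · simp [le_top, h1 k]
    · simp only [iff_false_intro (h2 k), iff_false]
      exact not_ofInt_le_bot k
    · push_neg at h1 h2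
      obtain ⟨k1, hk1⟩ := h1
      obtain ⟨k2, hk2⟩ := h2
      have hbdd : BddAbove {k | P (i, k)} := by
        refine ⟨k1, fun k hk => ?_⟩
        by_contra hlt
        push_neg at hlt
        exact hk1 (Pmono i k1 k (le_of_lt hlt) hk)
      have hne : {k | P (i, k)}.Nonempty := ⟨k2, hk2⟩
      have hmem : sSup {k | P (i, k)} ∈ {k | P (i, k)} := Int.csSup_mem hne hbdd
      rw [ofInt_le_ofInt]
      constructor
      · intro hk; exact Pmono i k _ hk hmem
      · intro hk; exact le_csSup hbdd hk
  have keyz : ∀ j, (zeta xlim j = true) ↔ P j := by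
    rintro ⟨i, k⟩
    simpa [zeta] using key i k
  have hx0lim : xlim 0 = Ztilde.ofInt 0 := by
    apply ext_of_forall_le
    intro k
    rw [key]
    have hallzeta : ∀ l, (zeta (xs l) (0, k) = true) ↔ k ≤ 0 := by
      intro l; simp [zeta, hx0 l, ofInt_le_ofInt]
    rw [ofInt_le_ofInt]
    by_cases hk : k ≤ 0
    · refine iff_of_true ?_ hk
      show {l | zeta (xs l) (0, k) = true} ∈ U
      rw [show {l : ℕ | zeta (xs l) (0, k) = true} = Set.univ from by
        ext l; simp [hallzeta l, hk]]
      exact Filter.univ_mem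
    · refine iff_of_false ?_ hk
      show ¬ {l | zeta (xs l) (0, k) = true} ∈ U
      rw [show {l : ℕ | zeta (xs l) (0, k) = true} = ∅ from by
        ext l; simp [hallzeta l, hk]]
      exact Filter.empty_notMem _
  have hlimit : ∀ m : ℕ, ∀ᶠ l in (U : Filter ℕ),
      ∀ j, idxNorm j ≤ m → zeta (xs l) j = zeta xlim j := by
    intro m
    have hfin : {j : (Fin d → ℤ) × ℤ | idxNorm j ≤ m}.Finite := finite_idx
    refine (Filter.eventually_all_finite hfin
      (p := fun j l => zeta (xs l) j = zeta xlim j) (l := (U : Filter ℕ))).mpr ?_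
    intro j hj
    by_cases hPj : P j
    · have hz : zeta xlim j = true := (keyz j).mpr hPj
      rw [hz]
      exact hPj
    · have hz : zeta xlim j = false := by
        rw [← Bool.not_eq_true]
        exact fun hc => hPj ((keyz j).mp hc)
      rw [hz]
      have hc : {l | ¬ zeta (xs l) j = true} ∈ U :=
        (Ultrafilter.compl_mem_iff_notMem).mpr hPj
      refine Filter.mem_of_superset hc ?_
      intro l hl
      simpa [Bool.not_eq_true] using hl
  -- F xlim 0 is finite
  have hxt : xlim 0 ≠ ⊤ := by rw [hx0lim]; exact ofInt_ne_top 0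
  have hxb : xlim 0 ≠ ⊥ := by rw [hx0lim]; exact ofInt_ne_bot 0
  obtain ⟨hft, hfb⟩ := hinf xlim 0
  rcases ztilde_cases (F xlim 0) with hz | hz | ⟨z, hz⟩
  · exact absurd (hfb.mp hz) hxb
  · exact absurd (hft.mp hz) hxt
  set N : ℕ := z.natAbs + 1 with hN
  obtain ⟨δ, hδ, hδprop⟩ := hcont xlim ((2:ℝ) ^ (-(N:ℤ) - 1)) (by positivity)
  obtain ⟨m, hm⟩ : ∃ m : ℕ, (2:ℝ) ^ (-(m:ℤ) - 1) < δ := by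
    obtain ⟨n, hn⟩ := exists_pow_lt_of_lt_one hδ (by norm_num : (1:ℝ)/2 < 1)
    refine ⟨n, lt_of_le_of_lt ?_ hn⟩
    have heq : ((1:ℝ)/2) ^ n = (2:ℝ) ^ (-(n:ℤ)) := by
      rw [one_div, inv_pow, ← zpow_natCast, ← zpow_neg]
    rw [heq]
    exact zpow_le_zpow_right₀ one_le_two (by omega)
  have hev1 := hlimit m
  have hev2 : ∀ᶠ l in (U : Filter ℕ), z.natAbs ≤ l := by
    have hcof : ∀ᶠ l in Filter.cofinite, z.natAbs ≤ l := by
      rw [Nat.cofinite_eq_atTop]; exact Filter.eventually_ge_atTop _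
    exact hcof.filter_mono (Filter.hyperfilter_le_cofinite)
  obtain ⟨l, hl1, hl2⟩ := (hev1.and hev2).exists
  have hdist : saDist xlim (xs l) < δ :=
    lt_of_le_of_lt (saDist_le (fun j hj => (hl1 j hj).symm)) hm
  have hFdist := hδprop (xs l) hdist
  have hagree := agree_of_saDist_lt hFdist
  have hsup0 : (Finset.univ.sup fun t : Fin d => ((0 : Fin d → ℤ) t).natAbs) ≤ 0 :=
    Finset.sup_le fun t _ => le_rfl
  have hnorm1 : idxNorm ((0 : Fin d → ℤ), z) ≤ N := by
    unfold idxNorm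
    exact max_le (le_trans hsup0 (by omega)) (by omega)
  have hnorm2 : idxNorm ((0 : Fin d → ℤ), z + 1) ≤ N := by
    unfold idxNorm
    exact max_le (le_trans hsup0 (by omega)) (by omega)
  have e1 := hagree ((0 : Fin d → ℤ), z) hnorm1
  have e2 := hagree ((0 : Fin d → ℤ), z + 1) hnorm2
  simp only [zeta, hz] at e1 e2
  -- F (xs l) 0 is finite
  obtain ⟨hft', hfb'⟩ := hinf (xs l) 0
  rcases ztilde_cases (F (xs l) 0) with hw | hw | ⟨w, hw⟩
  · exact absurd (hfb'.mp hw) (by rw [hx0 l]; exact ofInt_ne_bot 0)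
  · exact absurd (hft'.mp hw) (by rw [hx0 l]; exact ofInt_ne_top 0)
  rw [hw] at e1 e2
  simp only [ofInt_le_ofInt, decide_eq_decide] at e1 e2
  have hwz : w = z := by omega
  have := hbig l z (by rw [← hwz]; exact hw)
  omega
end

section
/- A cellular automaton G is nilpotent if and only if it is nilpotent on every initial configuration: there exist c ∈ A and N ∈ ℕ such that G^n(x) = c̄ for all configurations x and all n ≥ N, if and only if for every configuration x ∈ A^(ℤ^D) there exist c ∈ A and N ∈ ℕ such that G^n(x) = c̄ for all n ≥ N. -/
/-- The neighborhood `[−r,r]^D` of a cellular automaton of radius `r`. -/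
def CANbhd (D r : ℕ) := {j : Fin D → ℤ // ∀ t, (j t).natAbs ≤ r}

/-- The global rule of the `D`-dimensional cellular automaton over the alphabet
`A` with local rule `g` of radius `r`. -/
def caGlobal {D r : ℕ} {A : Type*} (g : (CANbhd D r → A) → A)
    (x : (Fin D → ℤ) → A) : (Fin D → ℤ) → A :=
  fun i => g fun j => x (i + j.1)

instance CANbhd.finite (D r : ℕ) : Finite (CANbhd D r) := by
  haveI : Finite (Set.Icc (-(r:ℤ)) (r:ℤ)) := (Set.finite_Icc _ _).to_subtype
  apply Finite.of_injective
    (fun j : CANbhd D r => fun t => (⟨j.1 t, by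
      have := j.2 t; constructor <;> omega⟩ : Set.Icc (-(r:ℤ)) (r:ℤ)))
  intro a b hab
  apply Subtype.ext; funext t
  exact congrArg Subtype.val (congrFun hab t)

/-- Locality: `n` iterations only depend on the ball of radius `r*n`. -/
lemma ca_local {D r : ℕ} {A : Type} (g : (CANbhd D r → A) → A) :
    ∀ (n : ℕ) (x y : (Fin D → ℤ) → A) (i : Fin D → ℤ),
      (∀ j : Fin D → ℤ, (∀ t, (j t - i t).natAbs ≤ r * n) → x j = y j) →
      (caGlobal g)^[n] x i = (caGlobal g)^[n] y i := by
  intro n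
  induction n with
  | zero => intro x y i h; exact h i (by simp)
  | succ n ih =>
    intro x y i h
    rw [Function.iterate_succ_apply, Function.iterate_succ_apply]
    apply ih
    intro j hj
    simp only [caGlobal]
    congr 1
    funext k
    apply h
    intro t
    have h1 := hj t
    have h2 := k.2 t
    have e : (j t + k.1 t - i t) = (j t - i t) + k.1 t := by ring
    calc (j t + k.1 t - i t).natAbs ≤ (j t - i t).natAbs + (k.1 t).natAbs := by
          rw [e]; exact Int.natAbs_add_le _ _
      _ ≤ r * n + r := add_le_add h1 h2
      _ = r * (n + 1) := by ring

/-- Shift equivariance. -/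
lemma ca_shift {D r : ℕ} {A : Type} (g : (CANbhd D r → A) → A)
    (v : Fin D → ℤ) (n : ℕ) (x : (Fin D → ℤ) → A) (i : Fin D → ℤ) :
    (caGlobal g)^[n] (fun j => x (j + v)) i = (caGlobal g)^[n] x (i + v) := by
  induction n generalizing x with
  | zero => rfl
  | succ n ih =>
    rw [Function.iterate_succ_apply, Function.iterate_succ_apply]
    have e : caGlobal g (fun j => x (j + v)) = fun j => caGlobal g x (j + v) := by
      funext j
      simp only [caGlobal]
      congr 1
      funext k
      congr 1
      exact (add_right_comm j v k.1).symm
    rw [e, ih]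

/-- If two orbits reach constants, the constants agree. -/
lemma ca_const_unique {D r : ℕ} (hD : 1 ≤ D) {A : Type}
    (g : (CANbhd D r → A) → A)
    (h : ∀ x : (Fin D → ℤ) → A, ∃ (c : A) (N : ℕ), ∀ n : ℕ, N ≤ n →
        (caGlobal g)^[n] x = fun _ => c)
    {x y : (Fin D → ℤ) → A} {c c' : A} {N N' : ℕ}
    (hx : ∀ n : ℕ, N ≤ n → (caGlobal g)^[n] x = fun _ => c)
    (hy : ∀ n : ℕ, N' ≤ n → (caGlobal g)^[n] y = fun _ => c') : c = c' := by
  have hc : ∀ m : ℕ, (caGlobal g)^[m] (fun _ => c) = fun _ => c := by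
    intro m
    calc (caGlobal g)^[m] (fun _ => c) = (caGlobal g)^[m] ((caGlobal g)^[N] x) := by
          rw [hx N le_rfl]
      _ = (caGlobal g)^[m + N] x := (Function.iterate_add_apply _ m N x).symm
      _ = fun _ => c := hx (m + N) (by omega)
  have hc' : ∀ m : ℕ, (caGlobal g)^[m] (fun _ => c') = fun _ => c' := by
    intro m
    calc (caGlobal g)^[m] (fun _ => c') = (caGlobal g)^[m] ((caGlobal g)^[N'] y) := by
          rw [hy N' le_rfl]
      _ = (caGlobal g)^[m + N'] y := (Function.iterate_add_apply _ m N' y).symm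
      _ = fun _ => c' := hy (m + N') (by omega)
  set t₀ : Fin D := ⟨0, hD⟩
  set z : (Fin D → ℤ) → A := fun j => if 0 ≤ j t₀ then c else c'
  obtain ⟨cz, Nz, hz⟩ := h z
  set R : ℤ := ((r * Nz : ℕ) : ℤ) with hR
  have h1 : cz = c := by
    have e1 : (caGlobal g)^[Nz] z (fun _ => R) =
        (caGlobal g)^[Nz] (fun _ => c) (fun _ => R) := by
      apply ca_local
      intro j hj
      have := hj t₀
      have : 0 ≤ j t₀ := by simp only [hR] at this ⊢; omega
      simp only [z, if_pos this]
    have e2 := congrFun (hz Nz le_rfl) (fun _ => R)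
    rw [e1, hc Nz] at e2
    exact e2.symm
  have h2 : cz = c' := by
    have e1 : (caGlobal g)^[Nz] z (fun _ => -R - 1) =
        (caGlobal g)^[Nz] (fun _ => c') (fun _ => -R - 1) := by
      apply ca_local
      intro j hj
      have := hj t₀
      have : ¬ 0 ≤ j t₀ := by simp only [hR] at this ⊢; omega
      simp only [z, if_neg this]
    have e2 := congrFun (hz Nz le_rfl) (fun _ => -R - 1)
    rw [e1, hc' Nz] at e2
    exact e2.symm
  rw [← h1, h2]

/-- A cellular automaton is nilpotent iff it is nilpotent on
every initial configuration: there exist `c ∈ A` and `N` such that `Gⁿ(x) = c̄`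
for all `x` and all `n ≥ N`, iff for every configuration `x` there exist `c ∈ A`
and `N` such that `Gⁿ(x) = c̄` for all `n ≥ N`. -/
theorem ca_nilpotent_iff_pointwise {D : ℕ} (hD : 1 ≤ D) {A : Type} [Finite A]
    [Nonempty A] {r : ℕ} (g : (CANbhd D r → A) → A) :
    (∃ (c : A) (N : ℕ), ∀ (x : (Fin D → ℤ) → A) (n : ℕ), N ≤ n →
        (caGlobal g)^[n] x = fun _ => c) ↔
      (∀ x : (Fin D → ℤ) → A, ∃ (c : A) (N : ℕ), ∀ n : ℕ, N ≤ n →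
        (caGlobal g)^[n] x = fun _ => c) := by
  constructor
  · rintro ⟨c, N, hc⟩ x
    exact ⟨c, N, fun n hn => hc x n hn⟩
  · intro h
    classical
    obtain ⟨c, N₀, h₀⟩ := h (fun _ => Classical.arbitrary A)
    letI : TopologicalSpace A := ⊥
    haveI : DiscreteTopology A := ⟨rfl⟩
    -- continuity of the global rule
    haveI : CompactSpace A := Finite.compactSpace
    haveI : T2Space A := DiscreteTopology.toT2Space
    haveI : LocallyCompactSpace A := WeaklyLocallyCompactSpace.locallyCompactSpace
    haveI : BaireSpace ((Fin D → ℤ) → A) := BaireSpace.of_t2Space_locallyCompactSpace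
    have hg : Continuous g := continuous_of_discreteTopology
    have hcont : Continuous (caGlobal g) := by
      apply continuous_pi
      intro i
      exact hg.comp (continuous_pi fun j => continuous_apply _)
    -- the closed sets of the cover
    set X : ℕ → Set ((Fin D → ℤ) → A) :=
      fun N => (caGlobal g)^[N] ⁻¹' {fun _ => c} with hX
    have hclosed : ∀ N, IsClosed (X N) :=
      fun N => (isClosed_singleton).preimage (hcont.iterate N)
    have hcover : ⋃ N, X N = Set.univ := by
      apply Set.eq_univ_of_forall
      intro x
      obtain ⟨cx, Nx, hx⟩ := h x
      have hcc : cx = c := ca_const_unique hD g h hx h₀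
      exact Set.mem_iUnion.mpr ⟨Nx, by simp [X, hcc ▸ hx Nx le_rfl]⟩
    obtain ⟨N, hNint⟩ := nonempty_interior_of_iUnion_of_closed hclosed hcover
    obtain ⟨x₀, hx₀⟩ := hNint
    -- extract a cylinder inside X N
    have hnhds : interior (X N) ∈ nhds x₀ := isOpen_interior.mem_nhds hx₀
    rw [nhds_pi, Filter.mem_pi] at hnhds
    obtain ⟨I, hIfin, t, ht, hsub⟩ := hnhds
    set t₀ : Fin D := ⟨0, hD⟩
    -- local consequence: far from I, N steps give c
    have key : ∀ (y : (Fin D → ℤ) → A) (i : Fin D → ℤ),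
        (∀ k : Fin D → ℤ, (∀ s, (k s - i s).natAbs ≤ r * N) → k ∉ I) →
        (caGlobal g)^[N] y i = c := by
      intro y i hi
      set y' : (Fin D → ℤ) → A := fun j => if j ∈ I then x₀ j else y j with hy'
      have hy'mem : y' ∈ X N := by
        apply interior_subset
        apply hsub
        intro j hj
        simp only [y', if_pos hj]
        exact mem_of_mem_nhds (ht j)
      have e1 : (caGlobal g)^[N] y i = (caGlobal g)^[N] y' i := by
        apply ca_local
        intro k hk
        simp only [y', if_neg (hi k hk)]
      rw [e1]
      have : (caGlobal g)^[N] y' = fun _ => c := hy'mem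
      exact congrFun this i
    -- bound on the coordinates of I
    obtain ⟨B, hB⟩ := (hIfin.image (fun j => j t₀)).bddAbove
    have hBmem : ∀ j ∈ I, j t₀ ≤ B := fun j hj => hB (Set.mem_image_of_mem _ hj)
    -- all configurations are c after N steps
    have main : ∀ y : (Fin D → ℤ) → A, (caGlobal g)^[N] y = fun _ => c := by
      intro y
      funext i
      set w : Fin D → ℤ := fun _ => B + ((r * N : ℕ) : ℤ) + 1 with hw
      set v : Fin D → ℤ := i - w with hv
      have hwv : w + v = i := by funext s; simp [v]
      have := ca_shift g v N y w
      rw [hwv] at this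
      rw [← this]
      apply key
      intro k hk hkI
      have h1 := hk t₀
      have h2 := hBmem k hkI
      simp only [hw] at h1
      omega
    refine ⟨c, N, fun x n hn => ?_⟩
    have e : N + (n - N) = n := by omega
    rw [← e, Function.iterate_add_apply]
    exact main _
end
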